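/- Let a, b ∈ {1,…,q−2} with q = p^t and a + (q−1)/2 ≡ b (mod q−1), with base-p digits a_i, b_i. Then there exists a unique carry sequence c_0,…,c_{t−1} ∈ {0,1}^t with c_t := c_0 such that a_i + (p−1)/2 + c_i = b_i + p·c_{i+1} for all 0 ≤ i ≤ t−1. -/

import Mathlib

/-- Modular `p`-ary add-with-carry: for `a, b ∈ {1, …, q−2}` with `q = p^t` and
`a + (q−1)/2 ≡ b (mod q−1)`, there is a unique carry sequence
`c : Fin t → {0,1}` (with the wraparound convention `c_t = c_0`) such that
`a_i + (p−1)/2 + c_i = b_i + p·c_{i+1}` for all `0 ≤ i ≤ t−1`, where `a_i, b_i`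
are the base-`p` digits of `a` and `b`. -/
theorem modular_add_with_carry
    (p t q : ℕ) [NeZero t] (hp : p.Prime) (hodd : Odd p) (ht : 1 ≤ t) (hq : q = p ^ t)
    (a b : ℕ) (ha1 : 1 ≤ a) (ha2 : a ≤ q - 2) (hb1 : 1 ≤ b) (hb2 : b ≤ q - 2)
    (hab : (a + (q - 1) / 2) % (q - 1) = b % (q - 1)) :
    ∃! c : Fin t → Fin 2,
      ∀ i : Fin t,
        (a / p ^ (i : ℕ)) % p + (p - 1) / 2 + ((c i : ℕ)) =
          (b / p ^ (i : ℕ)) % p + p * ((c (i + 1) : ℕ)) := by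
  have hp3 : 3 ≤ p := by
    rcases hodd with ⟨k, hk⟩
    have := hp.two_le
    omega
  have hq3 : 3 ≤ q := by
    have : p ≤ p ^ t := Nat.le_self_pow (by omega) p
    omega
  set m := (q - 1) / 2 with hm
  have hoddq : Odd q := hq ▸ hodd.pow
  have h2m : 2 * m + 1 = q := by rcases hoddq with ⟨k, hk⟩; omega
  have hblt : b < q - 1 := by omega
  have haq : a < q := by omega
  have hbq : b < q := by omega
  have hmq : m < q := by omega
  have hppos : ∀ j, 0 < p ^ j := fun j => pow_pos (by omega) j
  -- wraparound carry ε
  obtain ⟨ε, hε1, hεN⟩ : ∃ ε, ε ≤ 1 ∧ a + m + ε = b + ε * q := by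
    rw [Nat.mod_eq_of_lt hblt] at hab
    rcases lt_or_ge (a + m) (q - 1) with h | h
    · exact ⟨0, by omega, by rw [Nat.mod_eq_of_lt h] at hab; omega⟩
    · refine ⟨1, le_refl 1, ?_⟩
      have h2 : a + m - (q - 1) < q - 1 := by omega
      have : (a + m) % (q - 1) = a + m - (q - 1) := by
        rw [Nat.mod_eq_sub_mod h, Nat.mod_eq_of_lt h2]
      omega
  -- the carry sequence (on ℕ indices)
  set C : ℕ → ℕ := fun j => (a % p ^ j + m % p ^ j + ε) / p ^ j with hC
  have hCdef : ∀ j, C j = (a % p ^ j + m % p ^ j + ε) / p ^ j := fun j => by rw [hC]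
  have hCbound : ∀ j, C j < 2 := by
    intro j
    have h1 : a % p ^ j < p ^ j := Nat.mod_lt _ (hppos j)
    have h2 : m % p ^ j < p ^ j := Nat.mod_lt _ (hppos j)
    rw [hCdef j]
    exact Nat.div_lt_of_lt_mul (by omega)
  have hC0 : C 0 = ε := by rw [hCdef]; simp [Nat.mod_one]
  have hstar : ∀ j, a % p ^ j + m % p ^ j + ε = (a + m + ε) % p ^ j + C j * p ^ j := by
    intro j
    have h1 : (a % p ^ j + m % p ^ j + ε) % p ^ j = (a + m + ε) % p ^ j :=
      ((Nat.mod_modEq a (p ^ j)).add (Nat.mod_modEq m (p ^ j))).add_right ε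
    rw [hCdef j, ← h1]
    exact (Nat.mod_add_div' _ _).symm
  have hCt : C t = ε := by
    rw [hCdef t, Nat.mod_eq_of_lt (hq ▸ haq), Nat.mod_eq_of_lt (hq ▸ hmq)]
    rw [show a + m + ε = b + ε * p ^ t from by rw [← hq]; exact hεN]
    rw [Nat.add_mul_div_right _ _ (hppos t), Nat.div_eq_of_lt (hq ▸ hbq)]
    omega
  -- digits of m
  have hmmod : ∀ j, j ≤ t → 2 * (m % p ^ j) + 1 = p ^ j := by
    intro j hj
    obtain ⟨u, hu⟩ : Odd (p ^ (t - j)) := hodd.pow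
    obtain ⟨v, hv⟩ : Odd (p ^ j) := hodd.pow
    have hsplit : p ^ j * p ^ (t - j) = p ^ t := by
      rw [← pow_add]; congr 1; omega
    have h2m' : 2 * m + 1 = p ^ t := hq ▸ h2m
    have key : 2 * m + 1 = (2 * v + 1) * (2 * u + 1) := by
      rw [← hu, ← hv, hsplit, h2m']
    have hm2 : m = (2 * v + 1) * u + v := by ring_nf at key ⊢; linarith
    have hmv : m % p ^ j = v := by
      rw [hv, hm2, Nat.mul_add_mod, Nat.mod_eq_of_lt (by omega)]
    rw [hmv, hv]
  have h2d : 2 * ((p - 1) / 2) + 1 = p := by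
    rcases hodd with ⟨k, hk⟩; omega
  have hdigit_m : ∀ j, j + 1 ≤ t → m % p ^ (j + 1) = m % p ^ j + p ^ j * ((p - 1) / 2) := by
    intro j hj
    have h1 := hmmod (j + 1) hj
    have h2 := hmmod j (by omega)
    have h3 : p ^ (j + 1) = p ^ j * p := pow_succ p j
    obtain ⟨x, hx⟩ : ∃ x, m % p ^ j = x := ⟨_, rfl⟩
    obtain ⟨X, hX⟩ : ∃ X, m % p ^ (j + 1) = X := ⟨_, rfl⟩
    rw [hx] at h2
    rw [hX] at h1
    rw [hx, hX, ← h2]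
    have key : 2 * X + 1 = (2 * x + 1) * (2 * ((p - 1) / 2) + 1) := by
      rw [h1, h3, h2, h2d]
    ring_nf at key ⊢
    linarith
  -- generic digit decomposition
  have hdec : ∀ (x j : ℕ), x % p ^ (j + 1) = x % p ^ j + p ^ j * (x / p ^ j % p) := by
    intro x j
    rw [pow_succ, Nat.mod_mul]
  -- main digit equation on ℕ indices
  have hkey : ∀ j, j < t →
      a / p ^ j % p + (p - 1) / 2 + C j = b / p ^ j % p + p * C (j + 1) := by
    intro j hj
    have e1 := hstar (j + 1)
    have e2 := hstar j
    have da := hdec a j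
    have dm := hdigit_m j (by omega)
    have dN := hdec (a + m + ε) j
    have hNd : (a + m + ε) / p ^ j % p = b / p ^ j % p := by
      have hrw : a + m + ε = b + (ε * p ^ (t - j - 1) * p) * p ^ j := by
        rw [hεN, hq]
        congr 1
        rw [mul_assoc, mul_assoc, ← pow_succ', ← pow_add]
        congr 2
        omega
      rw [hrw, Nat.add_mul_div_right _ _ (hppos j), Nat.add_mul_mod_self_right]
    have hpj1 : p ^ (j + 1) = p ^ j * p := pow_succ p j
    have scaled : p ^ j * (a / p ^ j % p + (p - 1) / 2 + C j)
        = p ^ j * (b / p ^ j % p + p * C (j + 1)) := by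
      rw [← hNd]
      rw [da, dm, dN, hpj1] at e1
      ring_nf at e1 e2 ⊢
      linarith
    exact Nat.eq_of_mul_eq_mul_left (hppos j) scaled
  have hCwrap : ∀ j, j < t → C ((j + 1) % t) = C (j + 1) := by
    intro j hj
    rcases Nat.lt_or_ge (j + 1) t with h | h
    · rw [Nat.mod_eq_of_lt h]
    · have h' : j + 1 = t := by omega
      rw [h', Nat.mod_self, hC0, hCt]
  refine ⟨fun i => ⟨C i.val, hCbound _⟩, fun i => ?_, fun c' hc' => ?_⟩
  · show a / p ^ (i : ℕ) % p + (p - 1) / 2 + C i.val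
      = b / p ^ (i : ℕ) % p + p * C ((i + 1 : Fin t)).val
    have hv : ((i + 1 : Fin t)).val = ((i : ℕ) + 1) % t := by
      rw [Fin.add_def]
      simp [Fin.val_one', Nat.add_mod_mod]
    rw [hv, hCwrap i.val i.isLt]
    exact hkey i.val i.isLt
  · -- uniqueness
    have step : ∀ i : Fin t,
        ((c' i : ℕ) : ℤ) - (C i.val : ℤ)
          = p * (((c' (i + 1) : ℕ) : ℤ) - (C ((i + 1 : Fin t)).val : ℤ)) := by
      intro i
      have e1 := hc' i
      have e2 : a / p ^ (i : ℕ) % p + (p - 1) / 2 + C i.val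
          = b / p ^ (i : ℕ) % p + p * C ((i + 1 : Fin t)).val := by
        have hv : ((i + 1 : Fin t)).val = ((i : ℕ) + 1) % t := by
          rw [Fin.add_def]
          simp [Fin.val_one', Nat.add_mod_mod]
        rw [hv, hCwrap i.val i.isLt]
        exact hkey i.val i.isLt
      have e1' := congrArg (Nat.cast : ℕ → ℤ) e1
      have e2' := congrArg (Nat.cast : ℕ → ℤ) e2
      push_cast at e1' e2'
      linarith
    open Fin.NatCast in
    have iter : ∀ k : ℕ, ∀ i : Fin t,
        ((c' i : ℕ) : ℤ) - (C i.val : ℤ)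
          = (p : ℤ) ^ k * (((c' (i + (k : Fin t)) : ℕ) : ℤ) - (C ((i + (k : Fin t)) : Fin t).val : ℤ)) := by
      intro k
      induction k with
      | zero => intro i; simp
      | succ n ih =>
        intro i
        have h1' := ih i
        have h2' := step (i + (n : Fin t))
        have hcast : (((n + 1 : ℕ)) : Fin t) = (n : Fin t) + 1 := by push_cast; ring
        rw [hcast, ← add_assoc]
        rw [h1', h2']
        ring
    funext i
    have hthis := iter t i
    open Fin.NatCast in
    rw [Fin.natCast_self, add_zero] at hthis
    have hb1' : ((c' i : ℕ) : ℤ) ≤ 1 := by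
      have := (c' i).isLt; exact_mod_cast by omega
    have hb2' : (C i.val : ℤ) ≤ 1 := by
      have := hCbound i.val; exact_mod_cast by omega
    have hn1 : (0 : ℤ) ≤ ((c' i : ℕ) : ℤ) := by positivity
    have hn2 : (0 : ℤ) ≤ (C i.val : ℤ) := by positivity
    have hp2 : (2 : ℤ) ≤ (p : ℤ) ^ t := by
      have h3 : 3 ≤ p ^ t := hq ▸ hq3
      exact_mod_cast by omega
    have hz : ((p : ℤ) ^ t - 1) * (((c' i : ℕ) : ℤ) - (C i.val : ℤ)) = 0 := by
      ring_nf at hthis ⊢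
      linarith
    have hEz : ((c' i : ℕ) : ℤ) - (C i.val : ℤ) = 0 := by
      rcases mul_eq_zero.mp hz with h | h
      · exfalso; linarith
      · exact h
    have hval : (c' i : ℕ) = C i.val := by exact_mod_cast sub_eq_zero.mp hEz
    exact Fin.ext hval
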